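/- Let f : ℕ → ℝ be positive, non-increasing, eventually convex (there is k₀ such that f(k+2) − f(k+1) ≥ f(k+1) − f(k) for all k ≥ k₀), and suppose the infimum L of {f(n) : n ≥ 1} satisfies L > 0. Define the rank-discounted value V_f(X) = Σ_{k=1}^{|X|} f(k)·X_k. Let Z₀ be a fixed population and let X be a population that is moderate with respect to Z₀, meaning that for every w with X(w) ≠ 0 there is z ≤ w with Z₀(z) ≠ 0. Then V_f(X + n·Z₀) − V_f(n·Z₀) → L·Tot(X) as n → ∞. -/

import Mathlib

/-- The size of a population: total number of welfare subjects. -/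
noncomputable def psize (X : ℝ →₀ ℕ) : ℕ := X.sum fun _ n => n

/-- Total welfare of a population. -/
noncomputable def ptot (X : ℝ →₀ ℕ) : ℝ := X.sum fun w n => (n : ℝ) * w

/-- The welfare levels of a population, with multiplicity, sorted in increasing order.
The `k`-th worst-off individual (1-indexed) has welfare `(ranked X).getD (k-1) 0`. -/
noncomputable def ranked (X : ℝ →₀ ℕ) : List ℝ :=
  (Finsupp.toMultiset X).sort (· ≤ ·)

/-- Rank-discounted value: `Σ_{k=1}^{|X|} f(k) · X_k`, where `X_k` is the `k`-th
smallest welfare level of `X` counted with multiplicity. -/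
noncomputable def vrd (f : ℕ → ℝ) (X : ℝ →₀ ℕ) : ℝ :=
  ∑ k ∈ Finset.range (ranked X).length, f (k + 1) * (ranked X).getD k 0

/-- Value of a list with rank weights. -/
noncomputable def Svrd (f : ℕ → ℝ) (l : List ℝ) : ℝ :=
  ∑ k ∈ Finset.range l.length, f (k + 1) * l.getD k 0

lemma Svrd_cons (f : ℕ → ℝ) (a : ℝ) (l : List ℝ) :
    Svrd f (a :: l) = f 1 * a + Svrd (fun k => f (k + 1)) l := by
  unfold Svrd
  rw [List.length_cons, Finset.sum_range_succ']
  simp only [List.getD_cons_succ, List.getD_cons_zero, zero_add]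
  exact add_comm _ _

lemma Svrd_insert : ∀ (l₁ : List ℝ) (f : ℕ → ℝ) (w : ℝ) (l₂ : List ℝ),
    Svrd f (l₁ ++ w :: l₂) = Svrd f (l₁ ++ l₂) + f (l₁.length + 1) * w
      + ∑ j ∈ Finset.range l₂.length,
          (f (l₁.length + j + 2) - f (l₁.length + j + 1)) * l₂.getD j 0
  | [], f, w, l₂ => by
      rw [List.nil_append, List.nil_append, Svrd_cons]
      have h : (∑ k ∈ Finset.range l₂.length, f (k + 1) * l₂.getD k 0)
          + ∑ j ∈ Finset.range l₂.length, (f (j + 2) - f (j + 1)) * l₂.getD j 0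
          = ∑ k ∈ Finset.range l₂.length, f (k + 1 + 1) * l₂.getD k 0 := by
        rw [← Finset.sum_add_distrib]
        refine Finset.sum_congr rfl fun k _ => ?_
        ring_nf
      have hs : Svrd (fun k => f (k + 1)) l₂
          = ∑ k ∈ Finset.range l₂.length, f (k + 1 + 1) * l₂.getD k 0 := rfl
      have hs2 : Svrd f l₂ = ∑ k ∈ Finset.range l₂.length, f (k + 1) * l₂.getD k 0 := rfl
      simp only [List.length_nil, zero_add]
      rw [hs, hs2, ← h]
      ring
  | a :: t, f, w, l₂ => by
      rw [List.cons_append, Svrd_cons, Svrd_insert t (fun k => f (k + 1)) w l₂,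
        List.cons_append, Svrd_cons, List.length_cons]
      have h2 : (∑ j ∈ Finset.range l₂.length,
            (f (t.length + j + 2 + 1) - f (t.length + j + 1 + 1)) * l₂.getD j 0)
          = ∑ j ∈ Finset.range l₂.length,
            (f (t.length + 1 + j + 2) - f (t.length + 1 + j + 1)) * l₂.getD j 0 := by
        refine Finset.sum_congr rfl fun j _ => ?_
        have e1 : t.length + j + 2 + 1 = t.length + 1 + j + 2 := by omega
        have e2 : t.length + j + 1 + 1 = t.length + 1 + j + 1 := by omega
        rw [e1, e2]
      rw [h2]
      ring

lemma sorted_dropWhile_gt (w : ℝ) : ∀ (l : List ℝ), List.Pairwise (· ≤ ·) l →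
    ∀ x ∈ l.dropWhile (fun b => decide (b ≤ w)), w < x := by
  intro l
  induction l with
  | nil => intro _ x hx; simp at hx
  | cons a t ih =>
    intro hl x hx
    by_cases h : a ≤ w
    · rw [List.dropWhile_cons_of_pos (by simpa using h)] at hx
      exact ih hl.of_cons x hx
    · rw [List.dropWhile_cons_of_neg (by simpa using h)] at hx
      rcases List.mem_cons.mp hx with rfl | hxt
      · exact not_le.mp h
      · exact lt_of_lt_of_le (not_le.mp h) (List.rel_of_pairwise_cons hl hxt)

lemma multiset_key (f : ℕ → ℝ) (hmono : ∀ k, f (k + 1) ≤ f k)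
    (L : ℝ) (hL : IsGLB (Set.range fun n : ℕ => f (n + 1)) L)
    (Z : Multiset ℝ) (hZ : Z ≠ 0) (s : Multiset ℝ) :
    (∀ w ∈ s, ∃ z ∈ Z, z ≤ w) →
      Filter.Tendsto
        (fun n : ℕ => Svrd f ((s + n • Z).sort (· ≤ ·)) - Svrd f ((n • Z).sort (· ≤ ·)))
        Filter.atTop (nhds (L * s.sum)) := by
  have hA : Antitone f := antitone_nat_of_succ_le hmono
  have hLle : ∀ n : ℕ, L ≤ f (n + 1) := fun n => hL.1 ⟨n, rfl⟩
  have hfL : Filter.Tendsto (fun n : ℕ => f (n + 1)) Filter.atTop (nhds L) := by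
    refine tendsto_atTop_isGLB (fun a b hab => hA (Nat.add_le_add_right hab 1)) hL
  induction s using Multiset.induction with
  | empty =>
    intro _
    simpa using (tendsto_const_nhds :
      Filter.Tendsto (fun _ : ℕ => (0 : ℝ)) Filter.atTop (nhds 0))
  | cons w s ih =>
    intro hmod
    have hmods : ∀ w' ∈ s, ∃ z ∈ Z, z ≤ w' :=
      fun w' hw' => hmod w' (Multiset.mem_cons_of_mem hw')
    obtain ⟨z, hzZ, hzw⟩ := hmod w (Multiset.mem_cons_self w s)
    -- bound on the welfare levels involved
    have hTne : (w ::ₘ s + Z).toFinset.Nonempty :=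
      ⟨w, by simp⟩
    set M : ℝ := (w ::ₘ s + Z).toFinset.sup' hTne (fun x => |x|) with hMdef
    have hM : ∀ x ∈ w ::ₘ s + Z, |x| ≤ M := fun x hx =>
      Finset.le_sup' _ (Multiset.mem_toFinset.mpr hx)
    have hM0 : 0 ≤ M := le_trans (abs_nonneg w) (hM w (by simp))
    -- the single-insertion term
    set S : ℕ → ℝ := fun n =>
      Svrd f ((w ::ₘ (s + n • Z)).sort (· ≤ ·)) - Svrd f ((s + n • Z).sort (· ≤ ·)) with hSdef
    have hbound : ∀ n : ℕ, 1 ≤ n → |S n - L * w| ≤ (|w| + M) * (f (n + 1) - L) := by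
      intro n hn
      set l : List ℝ := (s + n • Z).sort (· ≤ ·) with hldef
      have hsorted : List.Pairwise (· ≤ ·) l := Multiset.pairwise_sort _ _
      set l₁ : List ℝ := l.takeWhile (fun b => decide (b ≤ w)) with hl₁
      set l₂ : List ℝ := l.dropWhile (fun b => decide (b ≤ w)) with hl₂
      have hsplit : l₁ ++ l₂ = l := List.takeWhile_append_dropWhile
      have h1w : ∀ x ∈ l₁, x ≤ w := fun x hx => by
        simpa using List.mem_takeWhile_imp hx
      have h2w : ∀ x ∈ l₂, w < x := sorted_dropWhile_gt w l hsorted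
      have hs1 : List.Pairwise (· ≤ ·) l₁ :=
        List.Pairwise.sublist (List.takeWhile_sublist _) hsorted
      have hs2 : List.Pairwise (· ≤ ·) l₂ :=
        List.Pairwise.sublist (List.dropWhile_sublist _) hsorted
      have hsorted' : List.Pairwise (· ≤ ·) (l₁ ++ w :: l₂) := by
        rw [List.pairwise_append]
        refine ⟨hs1, ?_, ?_⟩
        · rw [List.pairwise_cons]
          exact ⟨fun x hx => (h2w x hx).le, hs2⟩
        · intro a ha b hb
          rcases List.mem_cons.mp hb with rfl | hb
          · exact h1w a ha
          · exact (h1w a ha).trans (h2w b hb).le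
      have hcoe : ((l₁ ++ w :: l₂ : List ℝ) : Multiset ℝ) = w ::ₘ (s + n • Z) := by
        have hper : ((l₁ ++ w :: l₂ : List ℝ) : Multiset ℝ)
            = ((w :: (l₁ ++ l₂) : List ℝ) : Multiset ℝ) :=
          Multiset.coe_eq_coe.mpr List.perm_middle
        rw [hper, hsplit]
        rw [← Multiset.cons_coe]
        rw [hldef, Multiset.sort_eq]
      have claim1 : (w ::ₘ (s + n • Z)).sort (· ≤ ·) = l₁ ++ w :: l₂ := by
        refine List.Perm.eq_of_pairwise' (Multiset.pairwise_sort _ _) hsorted' ?_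
        rw [← Multiset.coe_eq_coe, Multiset.sort_eq, hcoe]
      -- position bound : n ≤ l₁.length
      have hcount2 : List.count z l₂ = 0 := by
        rw [List.count_eq_zero]
        intro hzl₂
        exact absurd hzw (not_le.mpr (h2w z hzl₂))
      have hp : n ≤ l₁.length := by
        have h1 : List.count z l = List.count z l₁ + List.count z l₂ := by
          rw [← hsplit, List.count_append]
        have h2 : Multiset.count z (s + n • Z) = List.count z l := by
          rw [← Multiset.coe_count, hldef, Multiset.sort_eq]
        have h3 : n ≤ Multiset.count z (s + n • Z) := by
          rw [Multiset.count_add, Multiset.count_nsmul]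
          have hc1 : 1 ≤ Multiset.count z Z := Multiset.one_le_count_iff_mem.mpr hzZ
          have : n ≤ n * Multiset.count z Z := Nat.le_mul_of_pos_right n hc1
          omega
        have h4 : List.count z l₁ ≤ l₁.length := List.count_le_length
        omega
      -- the elements of l₂ are bounded by M
      have hmem : ∀ x ∈ l₂, |x| ≤ M := by
        intro x hx
        have hxl : x ∈ l := (List.dropWhile_sublist _).mem hx
        have hxm : x ∈ s + n • Z := by
          rw [← Multiset.mem_coe, hldef, Multiset.sort_eq] at hxl
          exact hxl
        rcases Multiset.mem_add.mp hxm with hx1 | hx2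
        · exact hM x (Multiset.mem_add.mpr (Or.inl (Multiset.mem_cons_of_mem hx1)))
        · have hxZ : x ∈ Z := (Multiset.mem_nsmul.mp hx2).2
          exact hM x (Multiset.mem_add.mpr (Or.inr hxZ))
      -- compute S n
      have hSn : S n = f (l₁.length + 1) * w
          + ∑ j ∈ Finset.range l₂.length,
              (f (l₁.length + j + 2) - f (l₁.length + j + 1)) * l₂.getD j 0 := by
        rw [hSdef]
        simp only
        rw [claim1, Svrd_insert, hsplit]
        ring
      set p := l₁.length with hpdef
      -- bound the tail sum
      have htel : ∑ j ∈ Finset.range l₂.length, (f (p + j + 1) - f (p + j + 2))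
          = f (p + 1) - f (p + l₂.length + 1) := by
        have := Finset.sum_range_sub' (fun j => f (p + j + 1)) l₂.length
        rw [← this]
        refine Finset.sum_congr rfl fun j _ => ?_
        have e : p + (j + 1) + 1 = p + j + 2 := by omega
        rw [e]
      have htail : |∑ j ∈ Finset.range l₂.length,
            (f (p + j + 2) - f (p + j + 1)) * l₂.getD j 0|
          ≤ (f (p + 1) - f (p + l₂.length + 1)) * M := by
        calc |∑ j ∈ Finset.range l₂.length,
              (f (p + j + 2) - f (p + j + 1)) * l₂.getD j 0|
            ≤ ∑ j ∈ Finset.range l₂.length,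
              |(f (p + j + 2) - f (p + j + 1)) * l₂.getD j 0| :=
              Finset.abs_sum_le_sum_abs _ _
          _ ≤ ∑ j ∈ Finset.range l₂.length, (f (p + j + 1) - f (p + j + 2)) * M := by
              refine Finset.sum_le_sum fun j hj => ?_
              rw [abs_mul]
              have hj' : j < l₂.length := Finset.mem_range.mp hj
              have hd : f (p + j + 2) ≤ f (p + j + 1) := by
                have := hmono (p + j + 1)
                have e : p + j + 1 + 1 = p + j + 2 := by omega
                rwa [e] at this
              have habs1 : |f (p + j + 2) - f (p + j + 1)| = f (p + j + 1) - f (p + j + 2) := by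
                rw [abs_sub_comm]
                exact abs_of_nonneg (by linarith)
              rw [habs1]
              refine mul_le_mul_of_nonneg_left ?_ (by linarith)
              rw [List.getD_eq_getElem _ _ hj']
              exact hmem _ (List.getElem_mem hj')
          _ = (f (p + 1) - f (p + l₂.length + 1)) * M := by
              rw [← Finset.sum_mul, htel]
      have hfp : f (p + 1) ≤ f (n + 1) := hA (by omega)
      have hfpL : L ≤ f (p + 1) := by
        have : p + 1 = p + 1 := rfl
        exact hLle p
      have hfpl2 : L ≤ f (p + l₂.length + 1) := hLle _
      rw [hSn]
      have hw1 : |f (p + 1) * w - L * w| ≤ (f (n + 1) - L) * |w| := by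
        rw [← sub_mul, abs_mul]
        refine mul_le_mul_of_nonneg_right ?_ (abs_nonneg w)
        rw [abs_of_nonneg (by linarith)]
        linarith
      calc |f (p + 1) * w + (∑ j ∈ Finset.range l₂.length,
              (f (p + j + 2) - f (p + j + 1)) * l₂.getD j 0) - L * w|
          ≤ |f (p + 1) * w - L * w| + |∑ j ∈ Finset.range l₂.length,
              (f (p + j + 2) - f (p + j + 1)) * l₂.getD j 0| := by
            have : f (p + 1) * w + (∑ j ∈ Finset.range l₂.length,
                (f (p + j + 2) - f (p + j + 1)) * l₂.getD j 0) - L * w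
              = (f (p + 1) * w - L * w) + ∑ j ∈ Finset.range l₂.length,
                (f (p + j + 2) - f (p + j + 1)) * l₂.getD j 0 := by ring
            rw [this]
            exact abs_add_le _ _
        _ ≤ (f (n + 1) - L) * |w| + (f (p + 1) - f (p + l₂.length + 1)) * M :=
            add_le_add hw1 htail
        _ ≤ (f (n + 1) - L) * |w| + (f (n + 1) - L) * M := by
            refine add_le_add (le_refl _) (mul_le_mul_of_nonneg_right ?_ hM0)
            linarith
        _ = (|w| + M) * (f (n + 1) - L) := by ring
    -- S tends to L * w
    have hS : Filter.Tendsto S Filter.atTop (nhds (L * w)) := by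
      have h0 : Filter.Tendsto (fun n : ℕ => (|w| + M) * (f (n + 1) - L))
          Filter.atTop (nhds 0) := by
        have := (hfL.sub_const L).const_mul (|w| + M)
        simpa using this
      have hz : Filter.Tendsto (fun n : ℕ => S n - L * w) Filter.atTop (nhds 0) := by
        refine squeeze_zero_norm' ?_ h0
        filter_upwards [Filter.eventually_ge_atTop 1] with n hn
        simpa [Real.norm_eq_abs] using hbound n hn
      have := hz.add_const (L * w)
      simpa using this
    -- combine with induction hypothesis
    have heq : ∀ n : ℕ,
        Svrd f ((w ::ₘ s + n • Z).sort (· ≤ ·)) - Svrd f ((n • Z).sort (· ≤ ·))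
        = S n + (Svrd f ((s + n • Z).sort (· ≤ ·)) - Svrd f ((n • Z).sort (· ≤ ·))) := by
      intro n
      rw [hSdef]
      simp only
      rw [Multiset.cons_add]
      ring
    have hcomb := hS.add (ih hmods)
    have hsum : L * w + L * s.sum = L * (w ::ₘ s).sum := by
      rw [Multiset.sum_cons]; ring
    rw [← hsum] at *
    refine Filter.Tendsto.congr (fun n => (heq n).symm) hcomb

lemma ptot_toMultiset (X : ℝ →₀ ℕ) : (Finsupp.toMultiset X).sum = ptot X := by
  induction X using Finsupp.induction with
  | zero => simp [ptot]
  | single_add a b Y haY hb ihp =>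
    rw [Finsupp.toMultiset_add, Multiset.sum_add, ihp, Finsupp.toMultiset_single]
    have h1 : ((b • ({a} : Multiset ℝ)).sum) = (b : ℝ) * a := by
      rw [Multiset.sum_nsmul, Multiset.sum_singleton, nsmul_eq_mul]
    rw [h1]
    have h2 : ptot (Finsupp.single a b + Y) = ptot (Finsupp.single a b) + ptot Y := by
      unfold ptot
      refine Finsupp.sum_add_index' (fun a => by simp) (fun a b₁ b₂ => by push_cast; ring)
    rw [h2]
    have h3 : ptot (Finsupp.single a b) = (b : ℝ) * a := by
      unfold ptot
      rw [Finsupp.sum_single_index (by simp)]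
    rw [h3]

theorem stmt_12 (f : ℕ → ℝ)
    (hpos : ∀ n : ℕ, n ≥ 1 → 0 < f n)
    (hmono : ∀ k, f (k + 1) ≤ f k)
    (hconv : ∃ k₀ : ℕ, ∀ k ≥ k₀, f (k + 2) - f (k + 1) ≥ f (k + 1) - f k)
    (L : ℝ) (hL : IsGLB (Set.range fun n : ℕ => f (n + 1)) L) (hLpos : 0 < L)
    (Z₀ : ℝ →₀ ℕ) (hZ₀ : Z₀ ≠ 0)
    (X : ℝ →₀ ℕ) (hX : X ≠ 0)
    (hmod : ∀ w : ℝ, X w ≠ 0 → ∃ z ≤ w, Z₀ z ≠ 0) :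
    Filter.Tendsto (fun n : ℕ => vrd f (X + n • Z₀) - vrd f (n • Z₀))
      Filter.atTop (nhds (L * ptot X)) := by
  have hZ : Finsupp.toMultiset Z₀ ≠ 0 := by
    intro h
    apply hZ₀
    obtain ⟨z, hz⟩ := Finsupp.support_nonempty_iff.mpr hZ₀
    have : z ∈ Finsupp.toMultiset Z₀ := (Finsupp.mem_toMultiset Z₀ z).mpr hz
    rw [h] at this
    exact absurd this (Multiset.notMem_zero z)
  have hmod' : ∀ w ∈ Finsupp.toMultiset X, ∃ z ∈ Finsupp.toMultiset Z₀, z ≤ w := by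
    intro w hw
    obtain ⟨z, hzw, hz⟩ := hmod w (Finsupp.mem_support_iff.mp ((Finsupp.mem_toMultiset X w).mp hw))
    exact ⟨z, (Finsupp.mem_toMultiset Z₀ z).mpr (Finsupp.mem_support_iff.mpr hz), hzw⟩
  have hptot : (Finsupp.toMultiset X).sum = ptot X := ptot_toMultiset X
  have key := multiset_key f hmono L hL (Finsupp.toMultiset Z₀) hZ (Finsupp.toMultiset X) hmod'
  rw [hptot] at key
  refine key.congr fun n => ?_
  have e1 : Finsupp.toMultiset (X + n • Z₀)
      = Finsupp.toMultiset X + n • Finsupp.toMultiset Z₀ := by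
    rw [Finsupp.toMultiset_add, AddMonoidHom.map_nsmul]
  have e2 : Finsupp.toMultiset (n • Z₀) = n • Finsupp.toMultiset Z₀ :=
    AddMonoidHom.map_nsmul _ _ _
  simp only [vrd, ranked, Svrd, e1, e2]
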